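/- For fixed p ≥ 1, a nondecreasing μ : ℕ → ℕ, and R ≥ 0, the set L^p_μ(𝕋,R) of all f ∈ L^p(𝕋) with ‖f‖_p ≤ R and ‖f − τ_δ f‖_p ≤ 2^{-n} for all n and all |δ| ≤ 2^{-μ(n)} is a compact subset of L^p(𝕋). -/

import Mathlib

open MeasureTheory ENNReal Set

noncomputable section FKAux

local notation "𝕋" => AddCircle (1:ℝ)

instance FK.probVol : IsProbabilityMeasure (volume : Measure 𝕋) :=
  ⟨by simp [AddCircle.measure_univ]⟩

namespace FK

/-- canonical representative in `(0, 1]` -/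
def bfun (t : 𝕋) : ℝ := (AddCircle.equivIoc (1:ℝ) 0 t : ℝ)

lemma bfun_mem (t : 𝕋) : bfun t ∈ Ioc (0:ℝ) 1 := by
  have h := (AddCircle.equivIoc (1:ℝ) 0 t).2
  simpa [bfun] using h

lemma bfun_measurable : Measurable bfun := by
  have : bfun = (fun x : Ioc (0:ℝ) (0+1) => (x:ℝ)) ∘ (AddCircle.measurableEquivIoc 1 0) := rfl
  rw [this]
  exact measurable_subtype_coe.comp (AddCircle.measurableEquivIoc 1 0).measurable

lemma coe_bfun (t : 𝕋) : ((bfun t : ℝ) : 𝕋) = t :=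
  (AddCircle.equivIoc (1:ℝ) 0).symm_apply_apply t

lemma bfun_coe {x : ℝ} (hx : x ∈ Ioc (0:ℝ) 1) : bfun ((x : ℝ) : 𝕋) = x := by
  have hx' : x ∈ Ioc (0:ℝ) (0+1) := by rwa [zero_add]
  have : (AddCircle.equivIoc (1:ℝ) 0) ((x:ℝ):𝕋) = ⟨x, hx'⟩ := by
    rw [Equiv.apply_eq_iff_eq_symm_apply]; rfl
  unfold bfun
  rw [this]

/-- index of the dyadic-type cell containing `t` (cells are `(j/N, (j+1)/N]`). -/
def kfun (N : ℕ) (t : 𝕋) : ℕ := ⌈bfun t * N⌉₊ - 1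

lemma kfun_spec {N : ℕ} (hN : 0 < N) (t : 𝕋) :
    kfun N t < N ∧ bfun t ∈ Ioc ((kfun N t) * (N:ℝ)⁻¹) ((kfun N t + 1) * (N:ℝ)⁻¹) := by
  obtain ⟨hx0, hx1⟩ := bfun_mem t
  set x := bfun t
  have hNR : (0:ℝ) < N := by exact_mod_cast hN
  have hxN0 : 0 < x * N := by positivity
  have hxN1 : x * N ≤ N := by nlinarith
  have hm1 : 1 ≤ ⌈x * N⌉₊ := Nat.one_le_iff_ne_zero.mpr (by
    simp [Nat.ceil_eq_zero, not_le, hxN0])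
  have hmN : ⌈x * N⌉₊ ≤ N := Nat.ceil_le.mpr hxN1
  have hk : kfun N t = ⌈x * N⌉₊ - 1 := rfl
  have hkv : (kfun N t : ℝ) = (⌈x * N⌉₊ : ℝ) - 1 := by
    rw [hk]; push_cast [Nat.cast_sub hm1]; ring
  constructor
  · omega
  · constructor
    · have : (kfun N t : ℝ) < x * N := by
        rw [hkv]
        have := Nat.lt_ceil.mp (show ⌈x * N⌉₊ - 1 < ⌈x * N⌉₊ by omega)
        push_cast [Nat.cast_sub hm1] at this ⊢
        linarith
      calc (kfun N t : ℝ) * (N:ℝ)⁻¹ < (x * N) * (N:ℝ)⁻¹ := by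
            exact mul_lt_mul_of_pos_right this (by positivity)
        _ = x := by field_simp
    · have : x * N ≤ (kfun N t : ℝ) + 1 := by
        rw [hkv]
        have := Nat.le_ceil (x * N)
        linarith
      calc x = (x * N) * (N:ℝ)⁻¹ := by field_simp
        _ ≤ ((kfun N t : ℝ) + 1) * (N:ℝ)⁻¹ := by
            exact mul_le_mul_of_nonneg_right this (by positivity)

lemma kfun_lt {N : ℕ} (hN : 0 < N) (t : 𝕋) : kfun N t < N := (kfun_spec hN t).1

lemma kfun_measurable (N : ℕ) : Measurable (kfun N) := by
  have h1 : Measurable fun t : 𝕋 => ⌈bfun t * N⌉₊ := (bfun_measurable.mul_const _).nat_ceil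
  exact (measurable_from_top (f := fun m : ℕ => m - 1)).comp h1

/-- the `j`-th cell -/
def cell (N : ℕ) (j : ℕ) : Set 𝕋 := kfun N ⁻¹' {j}

lemma cell_measurable (N j : ℕ) : MeasurableSet (cell N j) :=
  kfun_measurable N (measurableSet_singleton j)

lemma kfun_eq_iff {N : ℕ} (hN : 0 < N) {j : ℕ} (hj : j < N) (t : 𝕋) :
    kfun N t = j ↔ bfun t ∈ Ioc ((j:ℝ) * (N:ℝ)⁻¹) (((j:ℝ) + 1) * (N:ℝ)⁻¹) := by
  constructor
  · rintro rfl
    exact_mod_cast (kfun_spec hN t).2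
  · rintro ⟨h1, h2⟩
    have hNR : (0:ℝ) < N := by exact_mod_cast hN
    have hceil : ⌈bfun t * N⌉₊ = j + 1 := by
      rw [Nat.ceil_eq_iff (by omega)]
      constructor
      · push_cast
        have : (j:ℝ) < bfun t * N := by
          have := mul_lt_mul_of_pos_right h1 hNR
          rw [mul_assoc, inv_mul_cancel₀ hNR.ne', mul_one] at this
          linarith
        simpa using this
      · push_cast
        have := mul_le_mul_of_nonneg_right h2 hNR.le
        rw [mul_assoc, inv_mul_cancel₀ hNR.ne', mul_one] at this
        linarith
    unfold kfun
    omega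

lemma cell_eq {N : ℕ} (hN : 0 < N) {j : ℕ} (hj : j < N) :
    cell N j = bfun ⁻¹' Ioc ((j:ℝ) * (N:ℝ)⁻¹) (((j:ℝ) + 1) * (N:ℝ)⁻¹) := by
  ext t
  exact kfun_eq_iff hN hj t

lemma volume_cell {N : ℕ} (hN : 0 < N) {j : ℕ} (hj : j < N) :
    volume (cell N j) = ENNReal.ofReal (N:ℝ)⁻¹ := by
  have hNR : (0:ℝ) < N := by exact_mod_cast hN
  rw [cell_eq hN hj]
  set A : Set ℝ := Ioc ((j:ℝ) * (N:ℝ)⁻¹) (((j:ℝ) + 1) * (N:ℝ)⁻¹) with hA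
  have hAsub : A ⊆ Ioc (0:ℝ) 1 := by
    intro x hx
    obtain ⟨h1, h2⟩ := hx
    constructor
    · have : (0:ℝ) ≤ (j:ℝ) * (N:ℝ)⁻¹ := by positivity
      linarith
    · have hjN : (j:ℝ) + 1 ≤ N := by
        have : (j:ℕ) + 1 ≤ N := hj
        exact_mod_cast this
      have : ((j:ℝ) + 1) * (N:ℝ)⁻¹ ≤ (N:ℝ) * (N:ℝ)⁻¹ := by
        exact mul_le_mul_of_nonneg_right hjN (by positivity)
      rw [mul_inv_cancel₀ hNR.ne'] at this
      linarith
  have hmeasA : MeasurableSet (bfun ⁻¹' A) := bfun_measurable measurableSet_Ioc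
  rw [AddCircle.add_projection_respects_measure (1:ℝ) 0 hmeasA]
  have hset : (QuotientAddGroup.mk ⁻¹' (bfun ⁻¹' A) ∩ Ioc 0 (0 + 1)) = A := by
    ext x
    simp only [mem_inter_iff, mem_preimage, zero_add]
    constructor
    · rintro ⟨hx1, hx2⟩
      rwa [bfun_coe hx2] at hx1
    · intro hx
      exact ⟨by rwa [bfun_coe (hAsub hx)], hAsub hx⟩
  rw [hset, hA, Real.volume_Ioc]
  congr 1
  ring

lemma norm_coe_le (x : ℝ) : ‖((x:ℝ) : 𝕋)‖ ≤ |x| := by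
  rw [AddCircle.norm_eq]
  rcases le_or_gt (1/2 : ℝ) |x| with h | h
  · have := abs_sub_round x
    simp only [inv_one, one_mul, mul_one]
    linarith
  · have hround : round x = 0 := by
      rw [round_eq, Int.floor_eq_zero_iff]
      constructor
      · cases abs_lt.mp h; linarith
      · cases abs_lt.mp h; linarith
    simp [hround]

lemma exists_rep_norm (δ : 𝕋) : ∃ x : ℝ, ((x:ℝ) : 𝕋) = δ ∧ |x| = ‖δ‖ := by
  obtain ⟨y, rfl⟩ := QuotientAddGroup.mk_surjective δ
  refine ⟨y - round y * 1, ?_, ?_⟩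
  · have : ((round y : ℝ) * 1 : ℝ) ∈ AddSubgroup.zmultiples (1:ℝ) := by
      exact ⟨round y, by simp⟩
    rw [AddCircle.coe_sub]
    rw [(QuotientAddGroup.eq_zero_iff _).mpr this]
    simp
  · rw [AddCircle.norm_eq]
    simp

lemma same_cell_norm_le {N : ℕ} (hN : 0 < N) {t u : 𝕋} (h : kfun N u = kfun N t) :
    ‖u - t‖ ≤ (N:ℝ)⁻¹ := by
  obtain ⟨-, hu⟩ := kfun_spec hN u
  obtain ⟨-, ht⟩ := kfun_spec hN t
  rw [h] at hu
  have hsub : u - t = ((bfun u - bfun t : ℝ) : 𝕋) := by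
    rw [AddCircle.coe_sub, coe_bfun, coe_bfun]
  rw [hsub]
  refine (norm_coe_le _).trans ?_
  rw [abs_le]
  obtain ⟨hu1, hu2⟩ := hu
  obtain ⟨ht1, ht2⟩ := ht
  constructor <;> nlinarith [ht1, ht2, hu1, hu2]

/-- averaged value on a cell -/
def avg (f₀ : 𝕋 → ℂ) (N : ℕ) (j : ℕ) : ℂ := (N : ℝ) • ∫ s in cell N j, f₀ s

/-- Jensen / Hölder: `(∫⁻ v)^q ≤ (μ univ)^(q-1) * ∫⁻ v^q` for `1 ≤ q`. -/
lemma pow_lintegral_le {α : Type*} [MeasurableSpace α] (μ : Measure α) {v : α → ℝ≥0∞}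
    (hv : AEMeasurable v μ) {q : ℝ} (hq : 1 ≤ q) :
    (∫⁻ a, v a ∂μ) ^ q ≤ (μ univ) ^ (q - 1) * ∫⁻ a, v a ^ q ∂μ := by
  rcases eq_or_lt_of_le hq with hq' | hq'
  · simp only [← hq', sub_self, ENNReal.rpow_one, ENNReal.rpow_zero, one_mul, le_refl]
  · have hcon : q.HolderConjugate (q / (q - 1)) := Real.HolderConjugate.conjExponent hq'
    have hH := ENNReal.lintegral_mul_le_Lp_mul_Lq μ hcon hv (aemeasurable_const (b := (1:ℝ≥0∞)))
    simp only [Pi.mul_apply, mul_one, ENNReal.one_rpow, lintegral_one] at hH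
    have hq0 : (0:ℝ) < q := by linarith
    calc (∫⁻ a, v a ∂μ) ^ q
        ≤ ((∫⁻ a, v a ^ q ∂μ) ^ (1/q) * (μ univ) ^ (1/(q/(q-1)))) ^ q := by
          exact ENNReal.rpow_le_rpow hH hq0.le
      _ = (∫⁻ a, v a ^ q ∂μ) * (μ univ) ^ (q - 1) := by
          rw [ENNReal.mul_rpow_of_nonneg _ _ hq0.le, ← ENNReal.rpow_mul, ← ENNReal.rpow_mul]
          congr 1
          · rw [one_div, inv_mul_cancel₀ hq0.ne', ENNReal.rpow_one]
          · congr 1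
            field_simp
      _ = (μ univ) ^ (q - 1) * ∫⁻ a, v a ^ q ∂μ := mul_comm _ _

end FK

end FKAux

noncomputable section FKAux2
local notation "𝕋" => AddCircle (1:ℝ)
namespace FK

lemma approx_bound {p : ℝ≥0∞} (hp1 : 1 ≤ p) (hp' : p ≠ ⊤) {f₀ : 𝕋 → ℂ}
    (hf : StronglyMeasurable f₀) (hmem : MemLp f₀ p volume) {N : ℕ} (hN : 0 < N) {η : ℝ≥0∞}
    (htrans : ∀ δ : ℝ, |δ| ≤ (N:ℝ)⁻¹ →
      ∫⁻ t, (‖f₀ t - f₀ (t + ((δ:ℝ) : 𝕋))‖₊ : ℝ≥0∞) ^ p.toReal ∂volume ≤ η) :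
    ∫⁻ t, (‖f₀ t - avg f₀ N (kfun N t)‖₊ : ℝ≥0∞) ^ p.toReal ∂volume ≤ 2 * η := by
  set q := p.toReal with hq
  have hq1 : 1 ≤ q := by
    rw [hq, ← ENNReal.toReal_one]
    exact ENNReal.toReal_mono hp' hp1
  have hq0 : (0:ℝ) < q := lt_of_lt_of_le one_pos hq1
  have hNR : (0:ℝ) < N := by exact_mod_cast hN
  set h' : ℝ := (N:ℝ)⁻¹ with hh'def
  have hh' : 0 < h' := by positivity
  set eh : ℝ≥0∞ := ENNReal.ofReal h' with hehdef
  have heh0 : eh ≠ 0 := by simp [hehdef, hh']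
  have hehtop : eh ≠ ⊤ := ENNReal.ofReal_ne_top
  have hehinv : eh⁻¹ = ENNReal.ofReal (N:ℝ) := by
    rw [hehdef, hh'def, ENNReal.ofReal_inv_of_pos hNR, inv_inv]
  set B : Set 𝕋 := Metric.closedBall (0:𝕋) h' with hBdef
  have hBmeas : MeasurableSet B := Metric.isClosed_closedBall.measurableSet
  set F : 𝕋 → 𝕋 → ℝ≥0∞ := fun t s => (‖f₀ t - f₀ s‖₊ : ℝ≥0∞) ^ q with hFdef
  have hfmeas : Measurable f₀ := hf.measurable
  -- pointwise estimate
  have hpoint : ∀ t : 𝕋, (‖f₀ t - avg f₀ N (kfun N t)‖₊ : ℝ≥0∞) ^ q ≤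
      eh⁻¹ * ∫⁻ δ, B.indicator (fun δ => F t (t + δ)) δ ∂volume := by
    intro t
    set j := kfun N t with hjdef
    have hjN : j < N := kfun_lt hN t
    set I : Set 𝕋 := cell N j with hIdef
    have hImeas : MeasurableSet I := cell_measurable N j
    have hIvol : volume I = eh := volume_cell hN hjN
    have hfin : IsFiniteMeasure (volume.restrict I) := by
      constructor
      rw [Measure.restrict_apply_univ]
      exact lt_of_le_of_lt (le_of_eq hIvol) (by simp [hehtop, lt_top_iff_ne_top])
    have hint : Integrable f₀ (volume.restrict I) := (hmem.restrict I).integrable hp1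
    have hintsub : Integrable (fun s => f₀ t - f₀ s) (volume.restrict I) :=
      (integrable_const (f₀ t)).sub hint
    -- step A : real estimate
    have hA : ‖f₀ t - avg f₀ N j‖ ≤ (N:ℝ) * ∫ s in I, ‖f₀ t - f₀ s‖ := by
      have hconst : ∫ (_ : 𝕋) in I, f₀ t ∂volume = h' • f₀ t := by
        rw [setIntegral_const, measureReal_def, hIvol, hehdef, ENNReal.toReal_ofReal hh'.le]
      have hft : f₀ t = (N:ℝ) • ∫ (_ : 𝕋) in I, f₀ t ∂volume := by
        rw [hconst, smul_smul, hh'def, mul_inv_cancel₀ hNR.ne', one_smul]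
      have hdiff : f₀ t - avg f₀ N j = (N:ℝ) • ∫ s in I, (f₀ t - f₀ s) ∂volume := by
        rw [integral_sub (integrable_const (f₀ t)) hint, smul_sub, ← hft]
        rfl
      rw [hdiff, norm_smul, Real.norm_natCast]
      refine mul_le_mul_of_nonneg_left ?_ (by positivity)
      exact norm_integral_le_integral_norm _
    -- step A' : ennreal version
    have hA2 : (‖f₀ t - avg f₀ N j‖₊ : ℝ≥0∞) ≤
        eh⁻¹ * ∫⁻ s in I, (‖f₀ t - f₀ s‖₊ : ℝ≥0∞) ∂volume := by
      have h1 : (‖f₀ t - avg f₀ N j‖₊ : ℝ≥0∞) = ENNReal.ofReal ‖f₀ t - avg f₀ N j‖ := by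
        rw [← coe_nnnorm, ENNReal.ofReal_coe_nnreal]
      rw [h1, hehinv]
      calc ENNReal.ofReal ‖f₀ t - avg f₀ N j‖
          ≤ ENNReal.ofReal ((N:ℝ) * ∫ s in I, ‖f₀ t - f₀ s‖) := ENNReal.ofReal_le_ofReal hA
        _ = ENNReal.ofReal (N:ℝ) * ENNReal.ofReal (∫ s in I, ‖f₀ t - f₀ s‖) := by
            rw [ENNReal.ofReal_mul hNR.le]
        _ = ENNReal.ofReal (N:ℝ) * ∫⁻ s in I, (‖f₀ t - f₀ s‖₊ : ℝ≥0∞) ∂volume := by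
            rw [ofReal_integral_norm_eq_lintegral_enorm hintsub]; simp only [enorm_eq_nnnorm]
    -- raise to power q and apply Hölder
    have hvmeas : AEMeasurable (fun s => (‖f₀ t - f₀ s‖₊ : ℝ≥0∞)) (volume.restrict I) :=
      ((measurable_const.sub hfmeas).nnnorm.coe_nnreal_ennreal).aemeasurable
    have hHold : (∫⁻ s in I, (‖f₀ t - f₀ s‖₊ : ℝ≥0∞) ∂volume) ^ q ≤
        eh ^ (q - 1) * ∫⁻ s in I, F t s ∂volume := by
      have := pow_lintegral_le (volume.restrict I) hvmeas hq1
      rwa [Measure.restrict_apply_univ, hIvol] at this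
    have hA3 : (‖f₀ t - avg f₀ N j‖₊ : ℝ≥0∞) ^ q ≤ eh⁻¹ * ∫⁻ s in I, F t s ∂volume := by
      calc (‖f₀ t - avg f₀ N j‖₊ : ℝ≥0∞) ^ q
          ≤ (eh⁻¹ * ∫⁻ s in I, (‖f₀ t - f₀ s‖₊ : ℝ≥0∞) ∂volume) ^ q :=
            ENNReal.rpow_le_rpow hA2 hq0.le
        _ = (eh⁻¹) ^ q * (∫⁻ s in I, (‖f₀ t - f₀ s‖₊ : ℝ≥0∞) ∂volume) ^ q := by
            rw [ENNReal.mul_rpow_of_nonneg _ _ hq0.le]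
        _ ≤ (eh⁻¹) ^ q * (eh ^ (q - 1) * ∫⁻ s in I, F t s ∂volume) :=
            mul_le_mul_right hHold _
        _ = ((eh⁻¹) ^ q * eh ^ (q - 1)) * ∫⁻ s in I, F t s ∂volume := by ring
        _ = eh⁻¹ * ∫⁻ s in I, F t s ∂volume := by
            congr 1
            rw [← ENNReal.rpow_neg_one eh, ← ENNReal.rpow_mul, ← ENNReal.rpow_add _ _ heh0 hehtop]
            congr 1
            ring
    -- substitution step
    have hsubst : ∫⁻ s in I, F t s ∂volume ≤ ∫⁻ δ, B.indicator (fun δ => F t (t + δ)) δ ∂volume := by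
      have h1 : ∫⁻ s in I, F t s ∂volume = ∫⁻ s, I.indicator (F t) s ∂volume := by
        rw [lintegral_indicator hImeas]
      have h2 : ∫⁻ s, I.indicator (F t) s ∂volume =
          ∫⁻ δ, I.indicator (F t) (t + δ) ∂volume := by
        rw [lintegral_add_left_eq_self (fun s => I.indicator (F t) s) t]
      rw [h1, h2]
      refine lintegral_mono fun δ => ?_
      by_cases hmem' : t + δ ∈ I
      · have hδB : δ ∈ B := by
          have hk : kfun N (t + δ) = kfun N t := hmem'
          have := same_cell_norm_le hN hk
          rw [add_sub_cancel_left] at this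
          simpa [hBdef, Metric.mem_closedBall, dist_zero_right] using this
        rw [Set.indicator_of_mem hmem', Set.indicator_of_mem hδB]
      · rw [Set.indicator_of_notMem hmem']
        exact zero_le
    exact hA3.trans (mul_le_mul_right hsubst _)
  -- integrate the pointwise estimate
  have hGmeas : Measurable (Function.uncurry fun t δ : 𝕋 =>
      B.indicator (fun δ => F t (t + δ)) δ) := by
    have h1 : (Function.uncurry fun t δ : 𝕋 => B.indicator (fun δ => F t (t + δ)) δ) =
        fun z : 𝕋 × 𝕋 => (B.indicator (fun _ => (1:ℝ≥0∞)) z.2) * F z.1 (z.1 + z.2) := by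
      funext z
      by_cases hz : z.2 ∈ B
      · simp [Function.uncurry, Set.indicator_of_mem hz]
      · simp [Function.uncurry, Set.indicator_of_notMem hz]
    rw [h1]
    refine Measurable.mul ?_ ?_
    · exact (measurable_const.indicator hBmeas).comp measurable_snd
    · have : Measurable fun z : 𝕋 × 𝕋 => f₀ z.1 - f₀ (z.1 + z.2) :=
        (hfmeas.comp measurable_fst).sub (hfmeas.comp (measurable_fst.add measurable_snd))
      exact (this.nnnorm.coe_nnreal_ennreal).pow_const q
  calc ∫⁻ t, (‖f₀ t - avg f₀ N (kfun N t)‖₊ : ℝ≥0∞) ^ q ∂volume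
      ≤ ∫⁻ t, eh⁻¹ * ∫⁻ δ, B.indicator (fun δ => F t (t + δ)) δ ∂volume ∂volume :=
        lintegral_mono hpoint
    _ = eh⁻¹ * ∫⁻ t, ∫⁻ δ, B.indicator (fun δ => F t (t + δ)) δ ∂volume ∂volume := by
        rw [lintegral_const_mul' _ _ (ENNReal.inv_ne_top.mpr heh0)]
    _ = eh⁻¹ * ∫⁻ δ, ∫⁻ t, B.indicator (fun δ' => F t (t + δ')) δ ∂volume ∂volume := by
        rw [lintegral_lintegral_swap hGmeas.aemeasurable]
    _ = eh⁻¹ * ∫⁻ δ in B, ∫⁻ t, F t (t + δ) ∂volume ∂volume := by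
        congr 1
        rw [← lintegral_indicator hBmeas]
        congr 1
        funext δ
        by_cases hδ : δ ∈ B
        · rw [Set.indicator_of_mem hδ]
          congr 1
          funext t
          rw [Set.indicator_of_mem hδ]
        · rw [Set.indicator_of_notMem hδ]
          simp [Set.indicator_of_notMem hδ]
    _ ≤ eh⁻¹ * ∫⁻ _ in B, η ∂volume := by
        refine mul_le_mul_right ?_ _
        refine setLIntegral_mono measurable_const fun δ hδ => ?_
        obtain ⟨x, rfl, hx⟩ := exists_rep_norm δ
        refine htrans x ?_
        rw [hx]
        simpa [hBdef, Metric.mem_closedBall, dist_zero_right] using hδ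
    _ = eh⁻¹ * (η * volume B) := by rw [setLIntegral_const]
    _ ≤ eh⁻¹ * (η * (2 * eh)) := by
        refine mul_le_mul_right (mul_le_mul_right ?_ _) _
        rw [hBdef, AddCircle.volume_closedBall, hehdef]
        calc ENNReal.ofReal (1 ⊓ 2 * h') ≤ ENNReal.ofReal (2 * h') :=
              ENNReal.ofReal_le_ofReal (min_le_right _ _)
          _ = ENNReal.ofReal 2 * ENNReal.ofReal h' := ENNReal.ofReal_mul (by norm_num)
          _ = 2 * ENNReal.ofReal h' := by norm_num
    _ = 2 * η := by
        rw [show eh⁻¹ * (η * (2 * eh)) = (eh⁻¹ * eh) * (2 * η) by ring,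
          ENNReal.inv_mul_cancel heh0 hehtop, one_mul]

end FK
end FKAux2

noncomputable section FKMain
open FK
local notation "𝕋" => AddCircle (1:ℝ)

theorem frechet_kolmogorov_compact (p : ℝ≥0∞) [hp : Fact (1 ≤ p)] (hp' : p ≠ ⊤)
    (μ : ℕ → ℕ) (hμ : Monotone μ) (R : ℝ) (hR : 0 ≤ R) :
    IsCompact {f : Lp ℂ p (volume : Measure (AddCircle (1:ℝ))) |
      ‖f‖ ≤ R ∧
      ∀ (n : ℕ) (δ : ℝ), |δ| ≤ (1/2 : ℝ) ^ (μ n) →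
        eLpNorm (fun t => f t - f (t + (δ : AddCircle (1:ℝ)))) p volume ≤ (1/2 : ℝ≥0∞) ^ n} := by
  have hp1 : 1 ≤ p := hp.out
  have hp0 : p ≠ 0 := (zero_lt_one.trans_le hp1).ne'
  have hq1 : 1 ≤ p.toReal := by
    rw [← ENNReal.toReal_one]
    exact ENNReal.toReal_mono hp' hp1
  have hq0 : (0:ℝ) < p.toReal := lt_of_lt_of_le one_pos hq1
  apply TotallyBounded.isCompact_of_isClosed
  · -- Totally bounded
    rw [Metric.totallyBounded_iff]
    intro ε hε
    obtain ⟨n, hn⟩ : ∃ n : ℕ, (1/2:ℝ)^n < ε/8 :=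
      exists_pow_lt_of_lt_one (by positivity) (by norm_num)
    set N : ℕ := 2 ^ (μ n) with hNdef
    have hN : 0 < N := pow_pos (by norm_num) _
    have hNinv : (N:ℝ)⁻¹ = (1/2:ℝ)^(μ n) := by
      rw [hNdef]
      push_cast
      rw [div_pow, one_pow, one_div]
    set M : ℝ := (N:ℝ) * R + 1 with hMdef
    have hM0 : 0 ≤ M := by positivity
    have hkm : Measurable fun t : 𝕋 => (⟨kfun N t, kfun_lt hN t⟩ : Fin N) := by
      refine measurable_to_countable' fun j => ?_
      have : (fun t : 𝕋 => (⟨kfun N t, kfun_lt hN t⟩ : Fin N)) ⁻¹' {j} = cell N (j:ℕ) := by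
        ext t
        simp only [Set.mem_preimage, Set.mem_singleton_iff, cell, Fin.ext_iff]
      rw [this]
      exact cell_measurable N _
    have hstep : ∀ c : Fin N → ℂ, MemLp (fun t : 𝕋 => c ⟨kfun N t, kfun_lt hN t⟩) p volume := by
      intro c
      refine MemLp.of_bound ((measurable_from_top.comp hkm).stronglyMeasurable.aestronglyMeasurable)
        ‖c‖ (Filter.Eventually.of_forall fun t => ?_)
      exact norm_le_pi_norm c _
    set Φ : (Fin N → ℂ) → Lp ℂ p (volume : Measure 𝕋) := fun c => (hstep c).toLp _ with hΦdef
    have hΦlip : LipschitzWith 1 Φ := by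
      refine LipschitzWith.of_dist_le_mul fun c c' => ?_
      rw [NNReal.coe_one, one_mul, dist_eq_norm, hΦdef]
      have hsub : (hstep c).toLp _ - (hstep c').toLp _ =
          ((hstep c).sub (hstep c')).toLp _ := MemLp.toLp_sub (hstep c) (hstep c')
      rw [hsub, MeasureTheory.Lp.norm_toLp _ ((hstep c).sub (hstep c'))]
      have hbound : eLpNorm (fun t : 𝕋 => c ⟨kfun N t, kfun_lt hN t⟩ - c' ⟨kfun N t, kfun_lt hN t⟩)
          p volume ≤ ENNReal.ofReal (dist c c') := by
        have := eLpNorm_le_of_ae_bound (μ := (volume : Measure 𝕋)) (p := p)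
          (f := fun t : 𝕋 => c ⟨kfun N t, kfun_lt hN t⟩ - c' ⟨kfun N t, kfun_lt hN t⟩)
          (C := dist c c') (Filter.Eventually.of_forall fun t => by
            rw [dist_eq_norm]
            exact norm_le_pi_norm (c - c') _)
        simpa using this
      exact ENNReal.toReal_le_of_le_ofReal dist_nonneg hbound
    have hTB : TotallyBounded (Φ '' Metric.closedBall 0 M) :=
      ((isCompact_closedBall (0 : Fin N → ℂ) M).totallyBounded).image hΦlip.uniformContinuous
    obtain ⟨t0, ht0fin, ht0cov⟩ := (Metric.totallyBounded_iff.mp hTB) (ε/2) (by positivity)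
    refine ⟨t0, ht0fin, ?_⟩
    intro f hf
    obtain ⟨hfR, hftrans⟩ := hf
    set f₀ : 𝕋 → ℂ := ⇑f with hf₀def
    have hmem : MemLp f₀ p volume := Lp.memLp f
    have hintf : Integrable f₀ volume := hmem.integrable hp1
    set c : Fin N → ℂ := fun j => avg f₀ N (j:ℕ) with hcdef
    -- c lies in the ball
    have hcK : c ∈ Metric.closedBall (0 : Fin N → ℂ) M := by
      rw [Metric.mem_closedBall, dist_zero_right]
      refine pi_norm_le_iff_of_nonneg hM0 |>.mpr fun j => ?_
      have hIvol := volume_cell hN j.2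
      have h1 : ‖avg f₀ N (j:ℕ)‖ ≤ (N:ℝ) * ∫ s in cell N (j:ℕ), ‖f₀ s‖ := by
        rw [avg, norm_smul, Real.norm_natCast]
        exact mul_le_mul_of_nonneg_left (norm_integral_le_integral_norm _) (by positivity)
      have h2 : ∫ s in cell N (j:ℕ), ‖f₀ s‖ ≤ ∫ s, ‖f₀ s‖ :=
        setIntegral_le_integral hintf.norm (Filter.Eventually.of_forall fun s => norm_nonneg _)
      have h3 : ∫ s, ‖f₀ s‖ ≤ R := by
        have he1 : ENNReal.ofReal (∫ s, ‖f₀ s‖) = eLpNorm f₀ 1 volume := by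
          rw [eLpNorm_one_eq_lintegral_enorm]
          exact ofReal_integral_norm_eq_lintegral_enorm hintf
        have he2 : eLpNorm f₀ 1 volume ≤ eLpNorm f₀ p volume :=
          eLpNorm_le_eLpNorm_of_exponent_le hp1 (Lp.aestronglyMeasurable f)
        have he3 : (∫ s, ‖f₀ s‖) = (eLpNorm f₀ 1 volume).toReal := by
          rw [← he1, ENNReal.toReal_ofReal (integral_nonneg fun s => norm_nonneg _)]
        rw [he3]
        calc (eLpNorm f₀ 1 volume).toReal ≤ (eLpNorm f₀ p volume).toReal :=
              ENNReal.toReal_mono (Lp.eLpNorm_ne_top f) he2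
          _ = ‖f‖ := (Lp.norm_def f).symm
          _ ≤ R := hfR
      calc ‖c j‖ ≤ (N:ℝ) * ∫ s, ‖f₀ s‖ := h1.trans (by
            exact mul_le_mul_of_nonneg_left h2 (by positivity))
        _ ≤ (N:ℝ) * R := mul_le_mul_of_nonneg_left h3 (by positivity)
        _ ≤ M := by rw [hMdef]; linarith
    -- distance from f to Φ c
    have htrans' : ∀ δ : ℝ, |δ| ≤ (N:ℝ)⁻¹ →
        ∫⁻ t, (‖f₀ t - f₀ (t + ((δ:ℝ):𝕋))‖₊ : ℝ≥0∞) ^ p.toReal ∂volume ≤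
          ((1/2 : ℝ≥0∞) ^ n) ^ p.toReal := by
      intro δ hδ
      rw [hNinv] at hδ
      have h0 := hftrans n δ hδ
      rw [eLpNorm_eq_lintegral_rpow_enorm_toReal hp0 hp'] at h0; simp only [enorm_eq_nnnorm] at h0
      have := ENNReal.rpow_le_rpow h0 hq0.le
      rwa [← ENNReal.rpow_mul, one_div, inv_mul_cancel₀ hq0.ne', ENNReal.rpow_one] at this
    have hmain := approx_bound hp1 hp' (Lp.stronglyMeasurable f) hmem hN htrans'
    have help : eLpNorm (⇑(f - Φ c)) p volume ≤ 2 * (1/2 : ℝ≥0∞) ^ n := by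
      have hcoe : ⇑(f - Φ c) =ᵐ[volume] fun t => f₀ t - avg f₀ N (kfun N t) := by
        filter_upwards [Lp.coeFn_sub f (Φ c), MemLp.coeFn_toLp (hstep c)] with t h2 h3
        rw [h2, Pi.sub_apply, h3]
      rw [eLpNorm_congr_ae hcoe, eLpNorm_eq_lintegral_rpow_enorm_toReal hp0 hp']
      calc (∫⁻ t, (‖f₀ t - avg f₀ N (kfun N t)‖₊ : ℝ≥0∞) ^ p.toReal ∂volume) ^ (1/p.toReal)
          ≤ (2 * ((1/2 : ℝ≥0∞) ^ n) ^ p.toReal) ^ (1/p.toReal) :=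
            ENNReal.rpow_le_rpow hmain (by positivity)
        _ = 2 ^ (1/p.toReal) * (1/2 : ℝ≥0∞) ^ n := by
            rw [ENNReal.mul_rpow_of_nonneg _ _ (by positivity), ← ENNReal.rpow_natCast
              (1/2 : ℝ≥0∞) n, ← ENNReal.rpow_mul, ← ENNReal.rpow_mul]
            congr 1
            · rw [show (n : ℝ) * (p.toReal * (1/p.toReal)) = (n:ℝ) by field_simp,
                ENNReal.rpow_natCast]
        _ ≤ 2 ^ (1:ℝ) * (1/2 : ℝ≥0∞) ^ n := by
            refine mul_le_mul_left (ENNReal.rpow_le_rpow_of_exponent_le one_le_two ?_) _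
            rw [div_le_one hq0]
            exact hq1
        _ = 2 * (1/2 : ℝ≥0∞) ^ n := by rw [ENNReal.rpow_one]
    have hdist : dist f (Φ c) < ε/2 := by
      rw [dist_eq_norm, Lp.norm_def]
      have h1 : (eLpNorm (⇑(f - Φ c)) p volume).toReal ≤ (2 * ((1:ℝ≥0∞)/2) ^ n).toReal :=
        ENNReal.toReal_mono (ENNReal.mul_ne_top (by norm_num) (ENNReal.pow_ne_top (by norm_num))) help
      refine lt_of_le_of_lt h1 ?_
      have h2 : (2 * ((1:ℝ≥0∞)/2) ^ n).toReal = 2 * (1/2:ℝ)^n := by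
        rw [ENNReal.toReal_mul, ENNReal.toReal_pow]
        norm_num
      rw [h2]
      linarith
    have hΦmem : Φ c ∈ Φ '' Metric.closedBall 0 M := Set.mem_image_of_mem Φ hcK
    obtain ⟨y, hy, hΦy⟩ := Set.mem_iUnion₂.mp (ht0cov hΦmem)
    refine Set.mem_iUnion₂.mpr ⟨y, hy, ?_⟩
    rw [Metric.mem_ball] at hΦy ⊢
    calc dist f y ≤ dist f (Φ c) + dist (Φ c) y := dist_triangle _ _ _
      _ < ε/2 + ε/2 := add_lt_add hdist hΦy
      _ = ε := by ring
  · -- Closed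
    have hSeq : {f : Lp ℂ p (volume : Measure 𝕋) | ‖f‖ ≤ R ∧
        ∀ (n : ℕ) (δ : ℝ), |δ| ≤ (1/2 : ℝ) ^ (μ n) →
          eLpNorm (fun t => f t - f (t + ((δ:ℝ) : 𝕋))) p volume ≤ (1/2 : ℝ≥0∞) ^ n} =
        {f : Lp ℂ p (volume : Measure 𝕋) | ‖f‖ ≤ R} ∩
        ⋂ (n : ℕ), ⋂ (δ : ℝ), ⋂ (_ : |δ| ≤ (1/2 : ℝ) ^ (μ n)),
          {f : Lp ℂ p (volume : Measure 𝕋) |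
            eLpNorm (fun t => f t - f (t + ((δ:ℝ) : 𝕋))) p volume ≤ (1/2 : ℝ≥0∞) ^ n} := by
      ext f
      simp only [Set.mem_setOf_eq, Set.mem_inter_iff, Set.mem_iInter]
    rw [hSeq]
    refine IsClosed.inter (isClosed_le continuous_norm continuous_const) ?_
    refine isClosed_iInter fun n => isClosed_iInter fun δ => isClosed_iInter fun hδ => ?_
    have hmp : MeasurePreserving (fun x : 𝕋 => x + ((δ:ℝ):𝕋)) volume volume :=
      measurePreserving_add_right volume _
    set τ : Lp ℂ p (volume : Measure 𝕋) →+ Lp ℂ p (volume : Measure 𝕋) :=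
      Lp.compMeasurePreserving _ hmp with hτdef
    have hkey : ∀ f : Lp ℂ p (volume : Measure 𝕋),
        eLpNorm (fun t => f t - f (t + ((δ:ℝ):𝕋))) p volume = ENNReal.ofReal ‖f - τ f‖ := by
      intro f
      have h1 : (fun t => f t - f (t + ((δ:ℝ):𝕋))) =ᵐ[volume] ⇑(f - τ f) := by
        filter_upwards [Lp.coeFn_sub f (τ f), Lp.coeFn_compMeasurePreserving f hmp] with t h2 h3
        rw [h2, Pi.sub_apply, h3]
        rfl
      rw [eLpNorm_congr_ae h1, Lp.norm_def, ENNReal.ofReal_toReal (Lp.eLpNorm_ne_top _)]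
    have hset : {f : Lp ℂ p (volume : Measure 𝕋) |
          eLpNorm (fun t => f t - f (t + ((δ:ℝ):𝕋))) p volume ≤ (1/2 : ℝ≥0∞) ^ n} =
        (fun f : Lp ℂ p (volume : Measure 𝕋) => ‖f - τ f‖) ⁻¹'
          {x : ℝ | ENNReal.ofReal x ≤ (1/2 : ℝ≥0∞) ^ n} := by
      ext f
      simp [hkey f]
    rw [hset]
    have hτcont : Continuous fun f : Lp ℂ p (volume : Measure 𝕋) => τ f :=
      (Lp.isometry_compMeasurePreserving (E := ℂ) (p := p) hmp).continuous
    have hcont : Continuous fun f : Lp ℂ p (volume : Measure 𝕋) => ‖f - τ f‖ :=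
      (continuous_id.sub hτcont).norm
    exact IsClosed.preimage hcont (isClosed_le ENNReal.continuous_ofReal continuous_const)

end FKMain
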